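/- For natural numbers d ≥ 1, m ≥ 2, n ≥ 2, and 1 ≤ ℓ ≤ n − 1, the inequality (2d)^(2^n − 1) · m^(2^(n−ℓ) − 2) · 2^(ℓ·2^(n−ℓ) − 3ℓ) ≤ (2d)^(2^n − 1) · m^(2^n − 1) · 2^(2^(n−1) − 1) holds (comparing the exponents over the integers, with the left-hand exponent of 2 possibly negative, interpreted in ℚ). -/

import Mathlib

theorem dominant_term_comparison (m d n ℓ : ℕ)
    (hd : 1 ≤ d) (hm : 2 ≤ m) (hn : 2 ≤ n) (hl1 : 1 ≤ ℓ) (hl2 : ℓ ≤ n - 1) :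
    ((2 * d : ℚ) ^ (2 ^ n - 1) * (m : ℚ) ^ (2 ^ (n - ℓ) - 2)) *
        (2 : ℚ) ^ ((ℓ : ℤ) * 2 ^ (n - ℓ) - 3 * (ℓ : ℤ)) ≤
      (2 * d : ℚ) ^ (2 ^ n - 1) * (m : ℚ) ^ (2 ^ n - 1) * 2 ^ (2 ^ (n - 1) - 1) := by
  have hm1 : (1 : ℚ) ≤ (m : ℚ) := by exact_mod_cast le_trans (by norm_num) hm
  -- monotonicity in the m-exponent
  have h1 : (m : ℚ) ^ (2 ^ (n - ℓ) - 2) ≤ (m : ℚ) ^ (2 ^ n - 1) := by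
    apply pow_le_pow_right₀ hm1
    have : 2 ^ (n - ℓ) ≤ 2 ^ n := Nat.pow_le_pow_right (by norm_num) (Nat.sub_le n ℓ)
    omega
  -- key exponent inequality for the power of 2
  have hkey : ℓ * 2 ^ (n - ℓ) ≤ 2 ^ (n - 1) := by
    have hle : ℓ ≤ 2 ^ (ℓ - 1) := by
      have := Nat.lt_two_pow_self (n := ℓ - 1)
      omega
    calc ℓ * 2 ^ (n - ℓ) ≤ 2 ^ (ℓ - 1) * 2 ^ (n - ℓ) := Nat.mul_le_mul_right _ hle
      _ = 2 ^ (ℓ - 1 + (n - ℓ)) := (pow_add 2 _ _).symm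
      _ = 2 ^ (n - 1) := by congr 1; omega
  have h2 : (2 : ℚ) ^ ((ℓ : ℤ) * 2 ^ (n - ℓ) - 3 * (ℓ : ℤ)) ≤
      (2 : ℚ) ^ ((2 ^ (n - 1) - 1 : ℕ) : ℤ) := by
    apply zpow_le_zpow_right₀ (by norm_num)
    have h2n : (2 : ℕ) ≤ 2 ^ (n - 1) := by
      calc (2:ℕ) = 2 ^ 1 := rfl
        _ ≤ 2 ^ (n - 1) := Nat.pow_le_pow_right (by norm_num) (by omega)
    have hcast : ((2 ^ (n - 1) - 1 : ℕ) : ℤ) = (2 : ℤ) ^ (n - 1) - 1 := by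
      rw [Nat.cast_sub (by omega : 1 ≤ 2 ^ (n - 1))]; push_cast; ring
    rw [hcast]
    have : ((ℓ * 2 ^ (n - ℓ) : ℕ) : ℤ) ≤ ((2 ^ (n - 1) : ℕ) : ℤ) := by exact_mod_cast hkey
    push_cast at this
    have hl : (1 : ℤ) ≤ (ℓ : ℤ) := by exact_mod_cast hl1
    linarith
  rw [show ((2 : ℚ) ^ ((2 ^ (n - 1) - 1 : ℕ) : ℤ)) = (2 : ℚ) ^ (2 ^ (n - 1) - 1) from
    zpow_natCast 2 _] at h2
  have hA : (0 : ℚ) ≤ (2 * d : ℚ) ^ (2 ^ n - 1) := by positivity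
  have hB : (0 : ℚ) ≤ (2 : ℚ) ^ ((ℓ : ℤ) * 2 ^ (n - ℓ) - 3 * (ℓ : ℤ)) := by positivity
  calc ((2 * d : ℚ) ^ (2 ^ n - 1) * (m : ℚ) ^ (2 ^ (n - ℓ) - 2)) *
        (2 : ℚ) ^ ((ℓ : ℤ) * 2 ^ (n - ℓ) - 3 * (ℓ : ℤ))
      ≤ ((2 * d : ℚ) ^ (2 ^ n - 1) * (m : ℚ) ^ (2 ^ n - 1)) *
        (2 : ℚ) ^ ((ℓ : ℤ) * 2 ^ (n - ℓ) - 3 * (ℓ : ℤ)) := by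
        apply mul_le_mul_of_nonneg_right _ hB
        exact mul_le_mul_of_nonneg_left h1 hA
    _ ≤ (2 * d : ℚ) ^ (2 ^ n - 1) * (m : ℚ) ^ (2 ^ n - 1) * 2 ^ (2 ^ (n - 1) - 1) := by
        apply mul_le_mul_of_nonneg_left h2
        positivity
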